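/- arXiv:2410.22038 — 2 statements merged into one kernel-verified Lean document; each statement's English description precedes it below -/
import Mathlib

section
/- Let 𝒫 be a family of Borel probability measures on ℝ^d, let ℋ be a collection of vector subspaces of ℝ^d, and let m ≥ 1. Suppose that (i) for each H ∈ ℋ, the distinct measures in the set {P_H : P ∈ 𝒫} form a linearly independent family; and (ii) for every partition of ℋ into 2m−1 subsets, at least one of the subsets is a Cramér–Wold system for 𝒫. If P and Q are each convex combinations of m measures from 𝒫 and P_H = Q_H for all H ∈ ℋ, then P = Q. -/
open MeasureTheory
open scoped NNReal ENNReal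

/-- The projection of a measure `P` on `ℝ^d` onto a vector subspace `H`:
the pushforward of `P` under the orthogonal projection onto `H`
(viewed inside the ambient space). -/
noncomputable def projMeasure {d : ℕ} (H : Submodule ℝ (EuclideanSpace ℝ (Fin d)))
    (P : Measure (EuclideanSpace ℝ (Fin d))) : Measure (EuclideanSpace ℝ (Fin d)) :=
  P.map (fun x => (H.orthogonalProjection x : EuclideanSpace ℝ (Fin d)))

/-- A family of (finite) measures is linearly independent: any vanishing real linear
combination of distinct members (as signed measures) has all coefficients zero. -/
def LinIndepMeasures {α : Type*} [MeasurableSpace α] (Pfam : Set (Measure α)) : Prop :=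
  ∀ (n : ℕ) (P : Fin n → Measure α) (hfin : ∀ j, IsFiniteMeasure (P j)),
    (∀ j, P j ∈ Pfam) → Function.Injective P →
    ∀ lam : Fin n → ℝ,
      (∑ j, lam j • @Measure.toSignedMeasure α _ (P j) (hfin j)) = 0 →
      ∀ j, lam j = 0

/-- `HH` is a Cramér–Wold system for `Pfam` if equality of the projections onto every
member of `HH` implies equality of the measures. -/
def IsCramerWoldSystem {d : ℕ} (Pfam : Set (Measure (EuclideanSpace ℝ (Fin d))))
    (HH : Set (Submodule ℝ (EuclideanSpace ℝ (Fin d)))) : Prop :=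
  ∀ P ∈ Pfam, ∀ Q ∈ Pfam, (∀ H ∈ HH, projMeasure H P = projMeasure H Q) → P = Q

open scoped Classical

lemma projMeas {d : ℕ} (H : Submodule ℝ (EuclideanSpace ℝ (Fin d))) :
    Measurable (fun x : EuclideanSpace ℝ (Fin d) =>
      (H.orthogonalProjection x : EuclideanSpace ℝ (Fin d))) :=
  (continuous_subtype_val.comp (H.orthogonalProjection).continuous).measurable

lemma sm_sum_apply {α : Type*} [MeasurableSpace α] {ι : Type*}
    (t : Finset ι) (f : ι → SignedMeasure α) (s : Set α) :
    (∑ i ∈ t, f i) s = ∑ i ∈ t, f i s := by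
  classical
  induction t using Finset.induction_on with
  | empty => simp
  | insert a s ha ih =>
    rw [Finset.sum_insert ha, Finset.sum_insert ha, VectorMeasure.add_apply, ih]

lemma key {d : ℕ} (Pfam : Set (Measure (EuclideanSpace ℝ (Fin d))))
    (H : Submodule ℝ (EuclideanSpace ℝ (Fin d)))
    (hli : LinIndepMeasures ((projMeasure H) '' Pfam))
    (T : Finset (Measure (EuclideanSpace ℝ (Fin d))))
    (hT : ∀ R ∈ T, R ∈ Pfam) (hTp : ∀ R ∈ T, IsProbabilityMeasure R)
    (c : Measure (EuclideanSpace ℝ (Fin d)) → ℝ)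
    (hzero : ∀ s, MeasurableSet s → ∑ R ∈ T, c R * ((projMeasure H R) s).toReal = 0)
    (R₀ : Measure (EuclideanSpace ℝ (Fin d))) (hR₀ : R₀ ∈ T) :
    ∑ R ∈ T.filter (fun R => projMeasure H R = projMeasure H R₀), c R = 0 := by
  classical
  set g := projMeasure H with hg
  set TH := T.image g with hTH
  set n := TH.card with hn
  set e : Fin n → Measure (EuclideanSpace ℝ (Fin d)) := fun i => ((TH.equivFin.symm i : TH) : Measure _) with he
  have heTH : ∀ i, e i ∈ TH := fun i => (TH.equivFin.symm i).2
  have hinj : Function.Injective e :=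
    Subtype.coe_injective.comp TH.equivFin.symm.injective
  have hprobe : ∀ i, IsProbabilityMeasure (e i) := by
    intro i
    obtain ⟨R, hR, hRe⟩ := Finset.mem_image.mp (heTH i)
    haveI := hTp R hR
    rw [← hRe]
    exact Measure.isProbabilityMeasure_map (projMeas H).aemeasurable
  have hfin : ∀ i, IsFiniteMeasure (e i) := fun i => by haveI := hprobe i; infer_instance
  have hmem : ∀ i, e i ∈ (projMeasure H) '' Pfam := by
    intro i
    obtain ⟨R, hR, hRe⟩ := Finset.mem_image.mp (heTH i)
    exact ⟨R, hT R hR, hRe⟩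
  set w : Fin n → ℝ := fun i => ∑ R ∈ T.filter (fun R => g R = e i), c R with hw
  have hsum : (∑ i, w i • @Measure.toSignedMeasure _ _ (e i) (hfin i)) = 0 := by
    apply VectorMeasure.ext
    intro s hs
    rw [VectorMeasure.zero_apply, sm_sum_apply]
    have : ∀ i, (w i • @Measure.toSignedMeasure _ _ (e i) (hfin i)) s
        = w i * ((e i) s).toReal := by
      intro i
      rw [VectorMeasure.smul_apply, @Measure.toSignedMeasure_apply_measurable _ _ _ (hfin i) _ hs]
      rfl
    rw [Finset.sum_congr rfl (fun i _ => this i)]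
    have h2 : ∑ i, w i * ((e i) s).toReal
        = ∑ S ∈ TH, (∑ R ∈ T.filter (fun R => g R = S), c R) * (S s).toReal := by
      rw [← Finset.sum_coe_sort TH (fun S => (∑ R ∈ T.filter (fun R => g R = S), c R) * ((S : Measure _) s).toReal)]
      exact (Equiv.sum_comp TH.equivFin.symm
        (fun S : TH => (∑ R ∈ T.filter (fun R => g R = (S : Measure _)), c R) * ((S : Measure _) s).toReal)).symm ▸ rfl
    rw [h2]
    have h3 : ∀ S ∈ TH, (∑ R ∈ T.filter (fun R => g R = S), c R) * (S s).toReal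
        = ∑ R ∈ T.filter (fun R => g R = S), c R * ((g R) s).toReal := by
      intro S _
      rw [Finset.sum_mul]
      refine Finset.sum_congr rfl ?_
      intro R hR
      rw [(Finset.mem_filter.mp hR).2]
    rw [Finset.sum_congr rfl h3,
      Finset.sum_fiberwise_of_maps_to (fun R hR => Finset.mem_image_of_mem g hR)]
    exact hzero s hs
  have hz := hli n e hfin hmem hinj w hsum
  have hgR₀ : g R₀ ∈ TH := Finset.mem_image_of_mem g hR₀
  have := hz (TH.equivFin ⟨g R₀, hgR₀⟩)
  rw [hw] at this
  simpa [he, Equiv.symm_apply_apply] using this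

/-- A Cramér–Wold theorem for mixtures. -/
theorem cramerWold_mixture {d m : ℕ} (hm : 1 ≤ m)
    (Pfam : Set (Measure (EuclideanSpace ℝ (Fin d))))
    (hprob : ∀ P ∈ Pfam, IsProbabilityMeasure P)
    (HH : Set (Submodule ℝ (EuclideanSpace ℝ (Fin d))))
    (h1 : ∀ H ∈ HH, LinIndepMeasures ((projMeasure H) '' Pfam))
    (h2 : ∀ f : Submodule ℝ (EuclideanSpace ℝ (Fin d)) → Fin (2 * m - 1),
      ∃ i, IsCramerWoldSystem Pfam {H ∈ HH | f H = i})
    (P Q : Measure (EuclideanSpace ℝ (Fin d)))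
    (lam nu : Fin m → ℝ≥0) (Ps Qs : Fin m → Measure (EuclideanSpace ℝ (Fin d)))
    (hPs : ∀ j, Ps j ∈ Pfam) (hQs : ∀ j, Qs j ∈ Pfam)
    (hlam : ∑ j, lam j = 1) (hnu : ∑ j, nu j = 1)
    (hP : P = ∑ j, lam j • Ps j) (hQ : Q = ∑ j, nu j • Qs j)
    (hproj : ∀ H ∈ HH, projMeasure H P = projMeasure H Q) :
    P = Q := by
  classical
  by_contra hne
  set T : Finset (Measure (EuclideanSpace ℝ (Fin d))) :=
    (Finset.univ.image Ps) ∪ (Finset.univ.image Qs) with hTdef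
  have hTmem : ∀ R ∈ T, R ∈ Pfam := by
    intro R hR
    rcases Finset.mem_union.mp hR with h | h
    · obtain ⟨j, _, rfl⟩ := Finset.mem_image.mp h; exact hPs j
    · obtain ⟨j, _, rfl⟩ := Finset.mem_image.mp h; exact hQs j
  have hTprob : ∀ R ∈ T, IsProbabilityMeasure R := fun R hR => hprob R (hTmem R hR)
  set a : Measure (EuclideanSpace ℝ (Fin d)) → ℝ≥0 :=
    fun R => ∑ j ∈ Finset.univ.filter (fun j => Ps j = R), lam j with ha
  set b : Measure (EuclideanSpace ℝ (Fin d)) → ℝ≥0 :=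
    fun R => ∑ j ∈ Finset.univ.filter (fun j => Qs j = R), nu j with hb
  set c : Measure (EuclideanSpace ℝ (Fin d)) → ℝ := fun R => (a R : ℝ) - (b R : ℝ) with hc
  have hPsmaps : ∀ j ∈ Finset.univ, Ps j ∈ T := fun j _ =>
    Finset.mem_union_left _ (Finset.mem_image_of_mem _ (Finset.mem_univ j))
  have hQsmaps : ∀ j ∈ Finset.univ, Qs j ∈ T := fun j _ =>
    Finset.mem_union_right _ (Finset.mem_image_of_mem _ (Finset.mem_univ j))
  -- Step A : some coefficient is nonzero
  have hPT : P = ∑ R ∈ T, a R • R := by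
    rw [hP, ← Finset.sum_fiberwise_of_maps_to hPsmaps (fun j => lam j • Ps j)]
    refine Finset.sum_congr rfl ?_
    intro R hR
    have h' : ∀ j ∈ Finset.univ.filter (fun j => Ps j = R), lam j • Ps j = lam j • R := by
      intro j hj; rw [(Finset.mem_filter.mp hj).2]
    rw [Finset.sum_congr rfl h', ← Finset.sum_smul]
  have hQT : Q = ∑ R ∈ T, b R • R := by
    rw [hQ, ← Finset.sum_fiberwise_of_maps_to hQsmaps (fun j => nu j • Qs j)]
    refine Finset.sum_congr rfl ?_
    intro R hR
    have h' : ∀ j ∈ Finset.univ.filter (fun j => Qs j = R), nu j • Qs j = nu j • R := by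
      intro j hj; rw [(Finset.mem_filter.mp hj).2]
    rw [Finset.sum_congr rfl h', ← Finset.sum_smul]
  have hex : ∃ R₀ ∈ T, c R₀ ≠ 0 := by
    by_contra hno
    push_neg at hno
    apply hne
    have hab : ∀ R ∈ T, a R = b R := by
      intro R hR
      have h0 := hno R hR
      rw [hc, sub_eq_zero] at h0
      exact_mod_cast h0
    rw [hPT, hQT]
    exact Finset.sum_congr rfl (fun R hR => by rw [hab R hR])
  obtain ⟨R₀, hR₀T, hc0⟩ := hex
  -- Step B : for each H in HH, some other member of T has the same projection as R₀
  have hstep : ∀ H ∈ HH, ∃ R ∈ T.erase R₀, projMeasure H R = projMeasure H R₀ := by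
    intro H hH
    have hPside : ∀ s : Set (EuclideanSpace ℝ (Fin d)), MeasurableSet s →
        ∀ (mu : Fin m → ℝ≥0) (Rs : Fin m → Measure (EuclideanSpace ℝ (Fin d))),
        (∀ j, Rs j ∈ Pfam) →
        (((∑ j, mu j • Rs j).map
          (fun x => (H.orthogonalProjection x : EuclideanSpace ℝ (Fin d)))) s).toReal
          = ∑ j, (mu j : ℝ) * ((projMeasure H (Rs j)) s).toReal := by
      intro s hs mu Rs hRs
      rw [Measure.map_apply (projMeas H) hs, Measure.finset_sum_apply]
      have hterm : ∀ j, (mu j • Rs j)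
          ((fun x => (H.orthogonalProjection x : EuclideanSpace ℝ (Fin d))) ⁻¹' s)
          = (mu j : ℝ≥0∞) * (projMeasure H (Rs j)) s := by
        intro j
        rw [Measure.smul_apply, projMeasure, Measure.map_apply (projMeas H) hs,
          ENNReal.smul_def, smul_eq_mul]
      rw [Finset.sum_congr rfl (fun j _ => hterm j)]
      rw [ENNReal.toReal_sum]
      · refine Finset.sum_congr rfl ?_
        intro j _
        rw [ENNReal.toReal_mul, ENNReal.coe_toReal]
      · intro j _
        haveI : IsProbabilityMeasure (Rs j) := hprob _ (hRs j)
        haveI : IsProbabilityMeasure (projMeasure H (Rs j)) :=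
          Measure.isProbabilityMeasure_map (projMeas H).aemeasurable
        exact ENNReal.mul_ne_top ENNReal.coe_ne_top (measure_ne_top _ _)
    have hzero : ∀ s, MeasurableSet s →
        ∑ R ∈ T, c R * ((projMeasure H R) s).toReal = 0 := by
      intro s hs
      have hgroup : ∀ (mu : Fin m → ℝ≥0) (Rs : Fin m → Measure (EuclideanSpace ℝ (Fin d))),
          (∀ j ∈ Finset.univ, Rs j ∈ T) →
          ∑ R ∈ T, ((∑ j ∈ Finset.univ.filter (fun j => Rs j = R), mu j : ℝ≥0) : ℝ)
              * ((projMeasure H R) s).toReal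
            = ∑ j, (mu j : ℝ) * ((projMeasure H (Rs j)) s).toReal := by
        intro mu Rs hmaps
        rw [← Finset.sum_fiberwise_of_maps_to hmaps
          (fun j => (mu j : ℝ) * ((projMeasure H (Rs j)) s).toReal)]
        refine Finset.sum_congr rfl ?_
        intro R hR
        rw [NNReal.coe_sum, Finset.sum_mul]
        refine Finset.sum_congr rfl ?_
        intro j hj
        rw [(Finset.mem_filter.mp hj).2]
      have hA := hgroup lam Ps hPsmaps
      have hB := hgroup nu Qs hQsmaps
      calc ∑ R ∈ T, c R * ((projMeasure H R) s).toReal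
          = ∑ R ∈ T, ((a R : ℝ) * ((projMeasure H R) s).toReal
              - (b R : ℝ) * ((projMeasure H R) s).toReal) := by
            refine Finset.sum_congr rfl ?_
            intro R _
            rw [hc, sub_mul]
        _ = ∑ R ∈ T, (a R : ℝ) * ((projMeasure H R) s).toReal
              - ∑ R ∈ T, (b R : ℝ) * ((projMeasure H R) s).toReal := by
            rw [Finset.sum_sub_distrib]
        _ = ((projMeasure H P) s).toReal - ((projMeasure H Q) s).toReal := by
            rw [ha, hb] at *
            rw [hA, hB, ← hPside s hs lam Ps hPs, ← hPside s hs nu Qs hQs]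
            rw [projMeasure, hP, projMeasure, hQ]
        _ = 0 := by rw [hproj H hH]; ring
    have hkey := key Pfam H (h1 H hH) T hTmem hTprob c hzero R₀ hR₀T
    by_contra hno
    push_neg at hno
    have hfil : T.filter (fun R => projMeasure H R = projMeasure H R₀) = {R₀} := by
      apply Finset.ext
      intro R
      simp only [Finset.mem_filter, Finset.mem_singleton]
      constructor
      · rintro ⟨hRT, hRe⟩
        by_contra hne'
        exact hno R (Finset.mem_erase.mpr ⟨hne', hRT⟩) hRe
      · rintro rfl; exact ⟨hR₀T, rfl⟩
    rw [hfil, Finset.sum_singleton] at hkey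
    exact hc0 hkey
  -- Step C : colouring argument
  have hcard : (T.erase R₀).card ≤ 2 * m - 1 := by
    have hT2 : T.card ≤ 2 * m := by
      calc T.card ≤ (Finset.univ.image Ps).card + (Finset.univ.image Qs).card :=
            Finset.card_union_le _ _
        _ ≤ m + m := by
            have := Finset.card_image_le (s := (Finset.univ : Finset (Fin m))) (f := Ps)
            have := Finset.card_image_le (s := (Finset.univ : Finset (Fin m))) (f := Qs)
            simp only [Finset.card_univ, Fintype.card_fin] at *
            omega
        _ = 2 * m := by ring
    rw [Finset.card_erase_of_mem hR₀T]
    omega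
  have hpos : 0 < 2 * m - 1 := by omega
  set eq1 := (T.erase R₀).equivFin with heq1
  set f : Submodule ℝ (EuclideanSpace ℝ (Fin d)) → Fin (2 * m - 1) := fun H =>
    if h : ∃ R ∈ T.erase R₀, projMeasure H R = projMeasure H R₀ then
      Fin.castLE hcard (eq1 ⟨h.choose, h.choose_spec.1⟩)
    else ⟨0, hpos⟩ with hf
  obtain ⟨i, hi⟩ := h2 f
  by_cases hne' : ∃ H₀, H₀ ∈ HH ∧ f H₀ = i
  · obtain ⟨H₀, hH₀, hfH₀⟩ := hne'
    have hex₀ := hstep H₀ hH₀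
    have hR'mem : hex₀.choose ∈ T.erase R₀ := hex₀.choose_spec.1
    have hall : ∀ H ∈ ({H ∈ HH | f H = i} : Set _),
        projMeasure H hex₀.choose = projMeasure H R₀ := by
      intro H hH
      obtain ⟨hHH, hfH⟩ := hH
      have hexH := hstep H hHH
      have heqf : f H = f H₀ := by rw [hfH, hfH₀]
      rw [hf] at heqf
      simp only [dif_pos hexH, dif_pos hex₀] at heqf
      have hch : hexH.choose = hex₀.choose := by
        have := Fin.castLE_injective hcard heqf
        have := eq1.injective this
        have h' := congrArg Subtype.val this
        exact h'
      rw [← hch]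
      exact hexH.choose_spec.2
    have hRR := hi hex₀.choose (hTmem _ (Finset.mem_of_mem_erase hR'mem)) R₀
      (hTmem R₀ hR₀T) hall
    exact (Finset.mem_erase.mp hR'mem).1 hRR
  · push_neg at hne'
    have hallP : ∀ R ∈ Pfam, ∀ R' ∈ Pfam, R = R' := by
      intro R hR R' hR'
      refine hi R hR R' hR' ?_
      intro H hH
      exact absurd hH.2 (hne' H hH.1)
    have hPsR : ∀ j, Ps j = R₀ := fun j => hallP _ (hPs j) _ (hTmem R₀ hR₀T)
    have hQsR : ∀ j, Qs j = R₀ := fun j => hallP _ (hQs j) _ (hTmem R₀ hR₀T)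
    apply hc0
    have haR : a R₀ = 1 := by
      have hfil : Finset.univ.filter (fun j => Ps j = R₀) = Finset.univ :=
        Finset.filter_true_of_mem (fun j _ => hPsR j)
      show ∑ j ∈ Finset.univ.filter (fun j => Ps j = R₀), lam j = 1
      rw [hfil]; exact hlam
    have hbR : b R₀ = 1 := by
      have hfil : Finset.univ.filter (fun j => Qs j = R₀) = Finset.univ :=
        Finset.filter_true_of_mem (fun j _ => hQsR j)
      show ∑ j ∈ Finset.univ.filter (fun j => Qs j = R₀), nu j = 1
      rw [hfil]; exact hnu
    show (a R₀ : ℝ) - (b R₀ : ℝ) = 0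
    rw [haR, hbR]
    simp
end

section
/- The family of univariate Gaussian density functions {f_{μ,σ} : μ ∈ ℝ, σ > 0}, where f_{μ,σ}(x) = (1/√(2πσ²)) exp(−(x−μ)²/(2σ²)), is linearly independent: if (μ₁,σ₁),…,(μₙ,σₙ) are distinct parameter pairs and λ₁,…,λₙ are real numbers with Σⱼ λⱼ f_{μⱼ,σⱼ}(x) = 0 for all x ∈ ℝ, then all λⱼ = 0. -/
open Real

/-- The univariate Gaussian density with mean `μ` and standard deviation `σ`. -/
noncomputable def gaussianDensity (μ σ x : ℝ) : ℝ :=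
  (Real.sqrt (2 * Real.pi * σ ^ 2))⁻¹ * Real.exp (-(x - μ) ^ 2 / (2 * σ ^ 2))

open Filter Topology

lemma lin_atBot (a b : ℝ) (ha : a < 0) : Tendsto (fun x : ℝ => a * x + b) atTop atBot := by
  apply tendsto_atBot_add_const_right
  exact tendsto_id.const_mul_atTop_of_neg ha

lemma quad_atBot (a b : ℝ) (h : a < 0 ∨ (a = 0 ∧ b < 0)) :
    Tendsto (fun x : ℝ => a * x ^ 2 + b * x) atTop atBot := by
  rcases h with ha | ⟨ha, hb⟩
  · have h1 := lin_atBot a b ha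
    have h2 := (tendsto_id (α := ℝ)).atTop_mul_atBot₀ h1
    refine h2.congr fun x => by simp; ring
  · subst ha
    exact (lin_atBot b 0 hb).congr fun x => by ring

lemma exp_quad_zero (a b : ℝ) (h : a < 0 ∨ (a = 0 ∧ b < 0)) :
    Tendsto (fun x : ℝ => Real.exp (a * x ^ 2 + b * x)) atTop (nhds 0) :=
  Real.tendsto_exp_atBot.comp (quad_atBot a b h)

lemma key_s1 {n : ℕ} (a b c : Fin n → ℝ) (s : Finset (Fin n))
    (hinj : ∀ i ∈ s, ∀ j ∈ s, a i = a j → b i = b j → i = j)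
    (h : ∀ x : ℝ, ∑ j ∈ s, c j * Real.exp (a j * x ^ 2 + b j * x) = 0) :
    ∀ j ∈ s, c j = 0 := by
  induction s using Finset.strongInductionOn with
  | _ s ih =>
    intro j hj
    obtain ⟨j₀, hj₀, hmax⟩ := s.exists_max_image (fun j => toLex (a j, b j)) ⟨j, hj⟩
    have hdom : ∀ i ∈ s.erase j₀,
        (a i - a j₀ < 0) ∨ (a i - a j₀ = 0 ∧ b i - b j₀ < 0) := by
      intro i hi
      obtain ⟨hne, his⟩ := Finset.mem_erase.mp hi
      have hle := hmax i his
      have hlt : toLex (a i, b i) < toLex (a j₀, b j₀) := by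
        rcases lt_or_eq_of_le hle with hlt | heq
        · exact hlt
        · exact absurd (hinj i his j₀ hj₀ (congrArg (fun q => (ofLex q).1) heq)
            (congrArg (fun q => (ofLex q).2) heq)) hne
      simp only [Prod.Lex.lt_iff, ofLex_toLex] at hlt
      rcases hlt with h1 | ⟨h1, h2⟩
      · left; linarith
      · right; constructor <;> [skip; linarith]
        linarith
    have heq : ∀ x : ℝ, c j₀ + ∑ i ∈ s.erase j₀,
        c i * Real.exp ((a i - a j₀) * x ^ 2 + (b i - b j₀) * x) = 0 := by
      intro x
      have h0 := h x
      rw [← Finset.add_sum_erase s _ hj₀] at h0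
      have hpos := Real.exp_pos (a j₀ * x ^ 2 + b j₀ * x)
      have hmul : (c j₀ + ∑ i ∈ s.erase j₀,
          c i * Real.exp ((a i - a j₀) * x ^ 2 + (b i - b j₀) * x)) *
          Real.exp (a j₀ * x ^ 2 + b j₀ * x) = 0 := by
        rw [add_mul, Finset.sum_mul]
        calc c j₀ * Real.exp (a j₀ * x ^ 2 + b j₀ * x) +
            ∑ i ∈ s.erase j₀, c i * Real.exp ((a i - a j₀) * x ^ 2 + (b i - b j₀) * x) *
              Real.exp (a j₀ * x ^ 2 + b j₀ * x)
            = c j₀ * Real.exp (a j₀ * x ^ 2 + b j₀ * x) +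
              ∑ i ∈ s.erase j₀, c i * Real.exp (a i * x ^ 2 + b i * x) := by
              congr 1
              refine Finset.sum_congr rfl fun i _ => ?_
              rw [mul_assoc, ← Real.exp_add]
              ring_nf
          _ = 0 := h0
      exact (mul_eq_zero.mp hmul).resolve_right (ne_of_gt hpos)
    have hc0 : c j₀ = 0 := by
      have hlim : Tendsto (fun x : ℝ => c j₀ + ∑ i ∈ s.erase j₀,
          c i * Real.exp ((a i - a j₀) * x ^ 2 + (b i - b j₀) * x)) atTop
          (nhds (c j₀ + ∑ i ∈ s.erase j₀, c i * 0)) := by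
        apply Tendsto.add tendsto_const_nhds
        apply tendsto_finset_sum
        intro i hi
        exact (exp_quad_zero _ _ (hdom i hi)).const_mul _
      have hlim0 : Tendsto (fun x : ℝ => c j₀ + ∑ i ∈ s.erase j₀,
          c i * Real.exp ((a i - a j₀) * x ^ 2 + (b i - b j₀) * x)) atTop (nhds 0) := by
        simp only [heq]; exact tendsto_const_nhds
      have := tendsto_nhds_unique hlim hlim0
      simpa using this
    by_cases hjj : j = j₀
    · rw [hjj]; exact hc0
    · refine ih (s.erase j₀) (Finset.erase_ssubset hj₀)
        (fun i hi k hk => hinj i (Finset.mem_of_mem_erase hi) k (Finset.mem_of_mem_erase hk))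
        (fun x => ?_) j (Finset.mem_erase.mpr ⟨hjj, hj⟩)
      have h0 := h x
      rw [← Finset.add_sum_erase s _ hj₀, hc0, zero_mul, zero_add] at h0
      exact h0


/-- The family of univariate Gaussian densities is linearly independent. -/
theorem gaussianDensity_linearIndependent (n : ℕ) (p : Fin n → ℝ × ℝ)
    (hσ : ∀ j, 0 < (p j).2) (hdist : Function.Injective p)
    (lam : Fin n → ℝ)
    (h : ∀ x : ℝ, ∑ j, lam j * gaussianDensity (p j).1 (p j).2 x = 0) :
    ∀ j, lam j = 0 := by
  set a : Fin n → ℝ := fun j => -(1 / (2 * (p j).2 ^ 2)) with ha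
  set b : Fin n → ℝ := fun j => (p j).1 / (p j).2 ^ 2 with hb
  set C : Fin n → ℝ := fun j =>
    (Real.sqrt (2 * Real.pi * (p j).2 ^ 2))⁻¹ * Real.exp (-(p j).1 ^ 2 / (2 * (p j).2 ^ 2)) with hC
  have hCpos : ∀ j, 0 < C j := by
    intro j
    apply mul_pos _ (Real.exp_pos _)
    rw [inv_pos]
    apply Real.sqrt_pos.mpr
    exact mul_pos (by positivity) (pow_pos (hσ j) 2)
  have hrw : ∀ j x, gaussianDensity (p j).1 (p j).2 x = C j * Real.exp (a j * x ^ 2 + b j * x) := by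
    intro j x
    have hσ2 : (p j).2 ≠ 0 := (hσ j).ne'
    have hexp : -(x - (p j).1) ^ 2 / (2 * (p j).2 ^ 2) =
        -(p j).1 ^ 2 / (2 * (p j).2 ^ 2) + (a j * x ^ 2 + b j * x) := by
      rw [ha, hb]
      field_simp
      ring
    unfold gaussianDensity
    rw [hexp, Real.exp_add, hC]
    ring
  have hinj : ∀ i ∈ Finset.univ, ∀ j ∈ (Finset.univ : Finset (Fin n)),
      a i = a j → b i = b j → i = j := by
    intro i _ j _ hai hbi
    have hσi := hσ i; have hσj := hσ j
    have hsq : (p i).2 ^ 2 = (p j).2 ^ 2 := by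
      have h1 : (2 * (p i).2 ^ 2)⁻¹ = (2 * (p j).2 ^ 2)⁻¹ := by
        have := hai
        simp only [ha, neg_inj, one_div] at this
        exact this
      have h2 := inv_injective h1
      linarith
    have hs : (p i).2 = (p j).2 := by
      nlinarith [sq_nonneg ((p i).2 - (p j).2), sq_nonneg ((p i).2 + (p j).2)]
    have hm : (p i).1 = (p j).1 := by
      rw [hb] at hbi
      simp only at hbi
      rw [hsq] at hbi
      have : (p j).2 ^ 2 ≠ 0 := by positivity
      field_simp at hbi
      exact hbi
    exact hdist (Prod.ext hm hs)
  have hc := key_s1 a b (fun j => lam j * C j) Finset.univ hinj (fun x => by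
    have h0 := h x
    calc ∑ j, lam j * C j * Real.exp (a j * x ^ 2 + b j * x)
        = ∑ j, lam j * gaussianDensity (p j).1 (p j).2 x := by
          refine Finset.sum_congr rfl fun j _ => ?_
          rw [hrw j x]; ring
      _ = 0 := h0)
  intro j
  have := hc j (Finset.mem_univ j)
  have hCj := (hCpos j).ne'
  exact (mul_eq_zero.mp this).resolve_right hCj
end
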